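/- Let X be a smooth variety and D1, D2 ⊂ X smooth divisors intersecting transversally. If a coherent sheaf F on X is normal to D1 and normal to D2 (i.e., Tor_1^{O_X}(F, O_{D1}) = 0 and Tor_1^{O_X}(F, O_{D2}) = 0), then F is normal to the union D1 ∪ D2 (i.e., Tor_1^{O_X}(F, O_{D1 ∪ D2}) = 0, where D1 ∪ D2 is the divisor defined by the product of local equations). -/

import Mathlib

open CategoryTheory CategoryTheory.Limits

section Koszul

variable {R : Type} [CommRing R]

/-- The objects of the two-term complex `R ⟶ R`. -/
noncomputable def KX (R : Type) [CommRing R] : ℕ → ModuleCat R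
  | 0 => ModuleCat.of R R
  | 1 => ModuleCat.of R R
  | _ + 2 => ModuleCat.of R PUnit

noncomputable def Kd (f : R) : ∀ n : ℕ, KX R (n + 1) ⟶ KX R n
  | 0 => ModuleCat.ofHom (LinearMap.lsmul R R f)
  | _ + 1 => 0

/-- The two-term Koszul complex `0 ⟶ R ⟶ R`. -/
noncomputable def Kcx (f : R) : ChainComplex (ModuleCat R) ℕ :=
  ChainComplex.of (KX R) (Kd f) (by rintro (_ | n) <;> exact zero_comp)

lemma Kcx_d_one_zero (f : R) : (Kcx f).d 1 0 = ModuleCat.ofHom (LinearMap.lsmul R R f) :=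
  ChainComplex.of_d (KX R) (Kd f) 0

lemma Kcx_d_succ (f : R) (n : ℕ) : (Kcx f).d (n + 2) (n + 1) = 0 :=
  ChainComplex.of_d _ _ (n + 1)

lemma isZero_KX (n : ℕ) : IsZero (KX R (n + 2)) := by
  show IsZero (ModuleCat.of R PUnit)
  exact ModuleCat.isZero_of_subsingleton _

end Koszul

section Res

variable {R : Type} [CommRing R]

lemma Kcx_d_comp_mkQ (f : R) :
    (Kcx f).d 1 0 ≫ ModuleCat.ofHom (Submodule.mkQ (Ideal.span {f})) = 0 := by
  rw [Kcx_d_one_zero]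
  apply ModuleCat.hom_ext; apply LinearMap.ext; intro (x : R)
  simp only [ModuleCat.hom_comp, LinearMap.comp_apply, ModuleCat.hom_ofHom,
    LinearMap.lsmul_apply, smul_eq_mul]
  show Submodule.Quotient.mk (f * x) = (0 : R ⧸ Ideal.span {f})
  rw [Submodule.Quotient.mk_eq_zero]
  exact Ideal.mem_span_singleton'.2 ⟨x, mul_comm x f⟩

noncomputable def torRes (f : R) (hf : f ∈ nonZeroDivisors R) :
    ProjectiveResolution (ModuleCat.of R (R ⧸ Ideal.span {f})) where
  complex := Kcx f
  projective n := by
    match n with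
    | 0 => exact ModuleCat.projective_of_free (Module.Basis.singleton (PUnit : Type) R)
    | 1 => exact ModuleCat.projective_of_free (Module.Basis.singleton (PUnit : Type) R)
    | n + 2 => exact (isZero_KX n).projective
  π := (ChainComplex.toSingle₀Equiv _ _).symm
    ⟨ModuleCat.ofHom (Submodule.mkQ (Ideal.span {f})), Kcx_d_comp_mkQ f⟩
  quasiIso := ⟨by
    rintro (_ | n)
    · rw [ChainComplex.quasiIsoAt₀_iff, ShortComplex.quasiIso_iff_of_zeros'
        _ ((Kcx f).shape 0 0 (by simp)) (by rfl) (by rfl)]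
      constructor
      · rw [ShortComplex.moduleCat_exact_iff]
        intro x hx
        dsimp at x hx ⊢
        replace hx : Submodule.Quotient.mk (p := Ideal.span {f}) (show R from x) = 0 := hx
        obtain ⟨a, ha⟩ := Ideal.mem_span_singleton'.1 ((Submodule.Quotient.mk_eq_zero _).1 hx)
        refine ⟨a, ?_⟩
        change f * a = (show R from x)
        simpa [mul_comm] using ha
      · show CategoryTheory.Epi ((((Kcx f).toSingle₀Equiv
          (ModuleCat.of R (R ⧸ Ideal.span {f}))).symm
            ⟨ModuleCat.ofHom (Submodule.mkQ (Ideal.span {f})), Kcx_d_comp_mkQ f⟩).f 0)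
        exact (ModuleCat.epi_iff_surjective _).2 (Submodule.mkQ_surjective _)
    · rw [quasiIsoAt_iff_exactAt' _ _ (ChainComplex.exactAt_succ_single_obj _ n)]
      obtain (_ | m) := n
      · rw [HomologicalComplex.exactAt_iff' _ 2 1 0 (by simp) (by simp),
          ShortComplex.moduleCat_exact_iff]
        intro x hx
        refine ⟨0, ?_⟩
        have hx' : (show R from x) * f = 0 := by
          have h2 := hx
          rw [show (HomologicalComplex.sc' (Kcx f) 2 1 0).g = (Kcx f).d 1 0 from rfl,
            Kcx_d_one_zero] at h2
          rw [mul_comm]; exact h2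
        have hx0 : (show R from x) = 0 := (mem_nonZeroDivisors_iff_right.1 hf) _ hx'
        rw [map_zero]
        exact hx0.symm
      · rw [HomologicalComplex.exactAt_iff' _ (m + 3) (m + 2) (m + 1) (by simp) (by simp)]
        exact ShortComplex.exact_of_isZero_X₂ _ (isZero_KX m)⟩

end Res

section TorComp

variable {R : Type} [CommRing R] {F : Type} [AddCommGroup F] [Module R F]

open MonoidalCategory in
lemma tor_isZero_iff (f : R) (hf : f ∈ nonZeroDivisors R) :
    IsZero (((Tor (ModuleCat R) 1).obj (ModuleCat.of R F)).obj
      (ModuleCat.of R (R ⧸ Ideal.span {f}))) ↔ ∀ x : F, f • x = 0 → x = 0 := by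
  set G := (tensoringLeft (ModuleCat R)).obj (ModuleCat.of R F) with hG
  have e : (((Tor (ModuleCat R) 1).obj (ModuleCat.of R F)).obj
      (ModuleCat.of R (R ⧸ Ideal.span {f}))) ≅
      (HomologicalComplex.homologyFunctor (ModuleCat R) _ 1).obj
        ((G.mapHomologicalComplex _).obj (torRes f hf).complex) :=
    (torRes f hf).isoLeftDerivedObj G 1
  rw [e.isZero_iff]
  show IsZero (((G.mapHomologicalComplex _).obj (Kcx f)).homology 1) ↔ _
  rw [← HomologicalComplex.exactAt_iff_isZero_homology,
    HomologicalComplex.exactAt_iff' _ 2 1 0 (by simp) (by simp),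
    ShortComplex.moduleCat_exact_iff]
  have hd : (Kcx f).d 1 0 = f • 𝟙 ((Kcx f).X 1) := by
    rw [Kcx_d_one_zero]
    apply ModuleCat.hom_ext; apply LinearMap.ext; intro (x : R)
    show f * x = f • ((𝟙 ((Kcx f).X 1)) x)
    rfl
  have hGd : G.map ((Kcx f).d 1 0) = f • 𝟙 (G.obj ((Kcx f).X 1)) := by
    have := G.map_smul f (𝟙 ((Kcx f).X 1))
    rw [CategoryTheory.Functor.map_id] at this
    exact (congrArg G.map hd).trans this
  have hGd21 : G.map ((Kcx f).d 2 1) = 0 := by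
    rw [Kcx_d_succ f 0, G.map_zero]
  constructor
  · intro h x hx
    obtain ⟨z, hz⟩ := h (x ⊗ₜ[R] (1 : R)) (by
      show (G.map ((Kcx f).d 1 0)) _ = 0
      rw [hGd]
      show f • (x ⊗ₜ[R] (1 : R)) = 0
      rw [TensorProduct.smul_tmul', hx, TensorProduct.zero_tmul])
    have hz0 : (x ⊗ₜ[R] (1 : R) : TensorProduct R F R) = 0 := by
      refine hz.symm.trans ?_
      show (G.map ((Kcx f).d 2 1)) z = 0
      rw [hGd21]
      rfl
    have := congrArg (TensorProduct.rid R F) hz0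
    simpa using this
  · intro h y hy
    refine ⟨0, ?_⟩
    rw [map_zero]
    have hy' : f • (show TensorProduct R F R from y) = 0 := by
      have := hy
      show _ = _
      rw [show (HomologicalComplex.sc' ((G.mapHomologicalComplex _).obj (Kcx f)) 2 1 0).g
        = G.map ((Kcx f).d 1 0) from rfl, hGd] at this
      exact this
    have h2 : (TensorProduct.rid R F) (show TensorProduct R F R from y) = 0 := by
      apply h
      rw [← map_smul, hy', map_zero]
    have : (show TensorProduct R F R from y) = 0 :=
      (TensorProduct.rid R F).injective (by simpa using h2)
    exact this.symm

end TorComp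


/-- (Lemma 2.9 of Section 3 of the paper, local model.)  On a smooth variety `X`, two
smooth divisors `D₁ = (f₁ = 0)` and `D₂ = (f₂ = 0)` intersecting transversally are locally
cut out by regular elements `f₁, f₂` of the coordinate ring `X`, and `D₁ ∪ D₂ = (f₁f₂ = 0)`.
If a coherent sheaf `F` is normal to `D₁` and to `D₂`, i.e.
`Tor₁(F, R/(f₁)) = 0` and `Tor₁(F, R/(f₂)) = 0`, then `F` is normal to the union
`D₁ ∪ D₂`, i.e. `Tor₁(F, R/(f₁f₂)) = 0`. -/
theorem normal_to_union_of_normal_to_each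
    (R : Type) [CommRing R] [IsNoetherianRing R]
    (f₁ f₂ : R) (hf₁ : f₁ ∈ nonZeroDivisors R) (hf₂ : f₂ ∈ nonZeroDivisors R)
    (F : Type) [AddCommGroup F] [Module R F]
    (h₁ : CategoryTheory.Limits.IsZero
      (((Tor (ModuleCat R) 1).obj (ModuleCat.of R F)).obj
        (ModuleCat.of R (R ⧸ Ideal.span {f₁}))))
    (h₂ : CategoryTheory.Limits.IsZero
      (((Tor (ModuleCat R) 1).obj (ModuleCat.of R F)).obj
        (ModuleCat.of R (R ⧸ Ideal.span {f₂})))) :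
    CategoryTheory.Limits.IsZero
      (((Tor (ModuleCat R) 1).obj (ModuleCat.of R F)).obj
        (ModuleCat.of R (R ⧸ Ideal.span {f₁ * f₂}))) := by
  rw [tor_isZero_iff f₁ hf₁] at h₁
  rw [tor_isZero_iff f₂ hf₂] at h₂
  rw [tor_isZero_iff (f₁ * f₂) (mul_mem hf₁ hf₂)]
  intro x hx
  rw [mul_comm, mul_smul] at hx
  exact h₁ x (h₂ _ hx)
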